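/- Integral representation of the logarithmic moment-generating function via relative entropy: Let X ∼ P and let f be a measurable real-valued function such that ψ(λ) = log E[exp(λ(f(X) − E[f(X)]))] is finite for all λ in a neighborhood of [0, λ₀]. Then for every λ ∈ (0, λ₀], ψ(λ) = λ·∫₀^λ D(P^{(tf)} ‖ P)/t² dt. -/

import Mathlib

open MeasureTheory Real
open Set Filter

/-- The relative entropy (in nats) `D(Q‖P) = ∫ log (dQ/dP) dQ`, as a real number (meaningful
when `Q ≪ P` and the integrand is `Q`-integrable). -/
noncomputable def relEntR {Ω : Type*} [MeasurableSpace Ω] (Q P : Measure Ω) : ℝ :=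
  ∫ ω, Real.log (Q.rnDeriv P ω).toReal ∂Q

lemma exp_mul_le_add' {x a b : ℝ} (u : ℝ) (hax : a ≤ x) (hxb : x ≤ b) :
    Real.exp (x * u) ≤ Real.exp (b * u) + Real.exp (a * u) := by
  rcases le_or_gt 0 u with h | h
  · exact le_add_of_le_of_nonneg (Real.exp_le_exp.2 (by nlinarith)) (Real.exp_pos _).le
  · exact le_add_of_nonneg_of_le (Real.exp_pos _).le (Real.exp_le_exp.2 (by nlinarith))

lemma abs_mul_exp_le' {δ : ℝ} (hδ : 0 < δ) (s u : ℝ) :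
    |u| * Real.exp (s * u) ≤ (Real.exp ((s + δ) * u) + Real.exp ((s - δ) * u)) / δ := by
  have h1 : δ * |u| ≤ Real.exp (δ * |u|) := by
    have := Real.add_one_le_exp (δ * |u|)
    nlinarith [mul_nonneg hδ.le (abs_nonneg u)]
  have h2 : Real.exp (δ * |u|) ≤ Real.exp (δ * u) + Real.exp (-(δ * u)) := by
    rcases abs_cases u with ⟨h, _⟩ | ⟨h, _⟩
    · rw [h]; exact le_add_of_le_of_nonneg le_rfl (Real.exp_pos _).le
    · rw [h, mul_neg]; exact le_add_of_nonneg_of_le (Real.exp_pos _).le le_rfl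
  have h3 : |u| ≤ (Real.exp (δ * u) + Real.exp (-(δ * u))) / δ := by
    rw [le_div_iff₀ hδ]; nlinarith
  calc |u| * Real.exp (s * u)
      ≤ (Real.exp (δ * u) + Real.exp (-(δ * u))) / δ * Real.exp (s * u) :=
        mul_le_mul_of_nonneg_right h3 (Real.exp_pos _).le
    _ = (Real.exp ((s + δ) * u) + Real.exp ((s - δ) * u)) / δ := by
        rw [div_mul_eq_mul_div, add_mul, ← Real.exp_add, ← Real.exp_add]
        ring_nf


/-- **Integral representation of the logarithmic moment-generating function via relative
entropy**: let `X ∼ P` and let `f` be measurable such that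
`ψ(λ) = log E[exp (λ (f(X) - E[f(X)]))]` is finite for all `λ` in a neighborhood of `[0, λ₀]`.
Then for every `λ ∈ (0, λ₀]`, `ψ(λ) = λ ∫₀^λ D(P^{(t f)} ‖ P) / t² dt`. -/
theorem lmgf_eq_integral_relEnt
    {Ω : Type*} [MeasurableSpace Ω] (P : Measure Ω) [IsProbabilityMeasure P]
    (f : Ω → ℝ) (hfmeas : Measurable f) (hfint : Integrable f P)
    (lam₀ : ℝ) (hlam₀ : 0 < lam₀)
    (ε : ℝ) (hε : 0 < ε)
    (hexp : ∀ t ∈ Set.Ioo (-ε) (lam₀ + ε), Integrable (fun ω => Real.exp (t * f ω)) P)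
    (lam : ℝ) (hlam : lam ∈ Set.Ioc 0 lam₀) :
    Real.log (∫ ω, Real.exp (lam * (f ω - ∫ ω', f ω' ∂P)) ∂P)
      = lam * ∫ t in (0 : ℝ)..lam, relEntR (P.tilted (fun ω => t * f ω)) P / t ^ 2 := by
  obtain ⟨hlam_pos, hlam_le⟩ := hlam
  set m : ℝ := ∫ ω, f ω ∂P with hm
  set Z : ℝ → ℝ := fun t => ∫ ω, Real.exp (t * f ω) ∂P with hZdef
  set Z' : ℝ → ℝ := fun t => ∫ ω, f ω * Real.exp (t * f ω) ∂P with hZ'def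
  have hIcc : ∀ s ∈ Icc (0 : ℝ) lam, s ∈ Ioo (-ε) (lam₀ + ε) := by
    intro s hs
    exact ⟨by linarith [hs.1], by linarith [hs.2]⟩
  have h0mem : (0 : ℝ) ∈ Ioo (-ε) (lam₀ + ε) := ⟨by linarith, by linarith⟩
  have hlammem : lam ∈ Ioo (-ε) (lam₀ + ε) := ⟨by linarith, by linarith⟩
  have hZpos : ∀ s ∈ Ioo (-ε) (lam₀ + ε), 0 < Z s := fun s hs => integral_exp_pos (hexp s hs)
  -- integrability of |f| e^{sf}
  have habs : ∀ s ∈ Ioo (-ε) (lam₀ + ε), Integrable (fun ω => |f ω| * Real.exp (s * f ω)) P := by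
    intro s hs
    set δ : ℝ := min (s + ε) (lam₀ + ε - s) / 2 with hδdef
    have hδpos : 0 < δ := by
      have h1 : 0 < s + ε := by linarith [hs.1]
      have h2 : 0 < lam₀ + ε - s := by linarith [hs.2]
      positivity
    have hδ1 : δ < s + ε := by
      have := min_le_left (s + ε) (lam₀ + ε - s); linarith [hδpos]
    have hδ2 : δ < lam₀ + ε - s := by
      have := min_le_right (s + ε) (lam₀ + ε - s); linarith [hδpos]
    have hp : s + δ ∈ Ioo (-ε) (lam₀ + ε) := ⟨by linarith [hs.1], by linarith⟩
    have hq : s - δ ∈ Ioo (-ε) (lam₀ + ε) := ⟨by linarith, by linarith [hs.2]⟩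
    refine (((hexp _ hp).add (hexp _ hq)).div_const δ).mono' ?_ ?_
    · exact ((hfmeas.abs.mul ((hfmeas.const_mul s).exp))).aestronglyMeasurable
    · filter_upwards with ω
      rw [Real.norm_eq_abs, abs_of_nonneg (by positivity)]
      exact abs_mul_exp_le' hδpos s (f ω)
  have hfe : ∀ s ∈ Ioo (-ε) (lam₀ + ε), Integrable (fun ω => f ω * Real.exp (s * f ω)) P := by
    intro s hs
    refine (habs s hs).mono' ?_ ?_
    · exact (hfmeas.mul ((hfmeas.const_mul s).exp)).aestronglyMeasurable
    · filter_upwards with ω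
      rw [Real.norm_eq_abs, abs_mul, abs_of_nonneg (Real.exp_pos _).le]
  -- differentiation under the integral
  have hZderiv : ∀ s ∈ Ioo (-ε) (lam₀ + ε), HasDerivAt Z (Z' s) s := by
    intro s hs
    set δ : ℝ := min (s + ε) (lam₀ + ε - s) / 2 with hδdef
    have hδpos : 0 < δ := by
      have h1 : 0 < s + ε := by linarith [hs.1]
      have h2 : 0 < lam₀ + ε - s := by linarith [hs.2]
      positivity
    have hδ1 : δ < s + ε := by
      have := min_le_left (s + ε) (lam₀ + ε - s); linarith [hδpos]
    have hδ2 : δ < lam₀ + ε - s := by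
      have := min_le_right (s + ε) (lam₀ + ε - s); linarith [hδpos]
    have hp : s + δ ∈ Ioo (-ε) (lam₀ + ε) := ⟨by linarith [hs.1], by linarith⟩
    have hq : s - δ ∈ Ioo (-ε) (lam₀ + ε) := ⟨by linarith, by linarith [hs.2]⟩
    have key := hasDerivAt_integral_of_dominated_loc_of_deriv_le (μ := P)
      (F := fun (x : ℝ) ω => Real.exp (x * f ω))
      (F' := fun (x : ℝ) ω => f ω * Real.exp (x * f ω))
      (x₀ := s)
      (bound := fun ω => |f ω| * (Real.exp ((s + δ) * f ω) + Real.exp ((s - δ) * f ω)))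
      (Metric.ball_mem_nhds s hδpos)
      (Eventually.of_forall fun x => ((hfmeas.const_mul x).exp).aestronglyMeasurable)
      (hexp s hs)
      ((hfmeas.mul ((hfmeas.const_mul s).exp)).aestronglyMeasurable)
      ?_ ?_ ?_
    · exact key.2
    · filter_upwards with ω x hx
      rw [Real.norm_eq_abs, abs_mul, abs_of_nonneg (Real.exp_pos _).le]
      have h1 : s - δ ≤ x := by
        have := abs_lt.mp (by simpa [Real.dist_eq] using Metric.mem_ball.mp hx)
        linarith [this.1]
      have h2 : x ≤ s + δ := by
        have := abs_lt.mp (by simpa [Real.dist_eq] using Metric.mem_ball.mp hx)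
        linarith [this.2]
      exact mul_le_mul_of_nonneg_left (exp_mul_le_add' (f ω) h1 h2) (abs_nonneg _)
    · have : (fun ω => |f ω| * (Real.exp ((s + δ) * f ω) + Real.exp ((s - δ) * f ω)))
          = fun ω => |f ω| * Real.exp ((s + δ) * f ω) + |f ω| * Real.exp ((s - δ) * f ω) := by
        funext ω; ring
      rw [this]
      exact (habs _ hp).add (habs _ hq)
    · filter_upwards with ω x _
      have h := (hasDerivAt_mul_const (f ω) (x := x)).exp
      simpa [mul_comm] using h
  have hΛderiv : ∀ s ∈ Ioo (-ε) (lam₀ + ε),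
      HasDerivAt (fun t => Real.log (Z t)) (Z' s / Z s) s := fun s hs =>
    (hZderiv s hs).log (hZpos s hs).ne'
  -- relative entropy formula
  have hrel : ∀ t ∈ Ioo (-ε) (lam₀ + ε),
      relEntR (P.tilted (fun ω => t * f ω)) P = t * (Z' t / Z t) - Real.log (Z t) := by
    intro t ht
    have he : Integrable (fun ω => Real.exp (t * f ω)) P := hexp t ht
    have hZr : (∫ x, Real.exp (t * f x) ∂P) = Z t := rfl
    have hZ'r : (∫ x, f x * Real.exp (t * f x) ∂P) = Z' t := rfl
    have hZne := (hZpos t ht).ne'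
    have hae := log_rnDeriv_tilted_left_self (μ := P) (f := fun ω => t * f ω) he
    have hae' : (fun x => Real.log (((P.tilted (fun ω => t * f ω)).rnDeriv P x).toReal))
        =ᵐ[P.tilted (fun ω => t * f ω)]
        (fun x => t * f x - Real.log (∫ x, Real.exp (t * f x) ∂P)) :=
      hae.filter_mono (tilted_absolutelyContinuous P (fun ω => t * f ω)).ae_le
    rw [relEntR, integral_congr_ae hae', integral_tilted (fun ω => t * f ω)]
    simp only [smul_eq_mul, hZr]
    have heq : (fun x => Real.exp (t * f x) / Z t * (t * f x - Real.log (Z t)))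
        = fun x => (t / Z t) * (f x * Real.exp (t * f x))
          - (Real.log (Z t) / Z t) * Real.exp (t * f x) := by
      funext x; ring
    rw [heq, integral_sub (((hfe t ht).const_mul _)) (he.const_mul _),
      integral_const_mul, integral_const_mul, hZr, hZ'r]
    field_simp
  -- nonnegativity
  have hDnn : ∀ t ∈ Ioo (-ε) (lam₀ + ε), Real.log (Z t) ≤ t * (Z' t / Z t) := by
    intro t ht
    have he : Integrable (fun ω => Real.exp (t * f ω)) P := hexp t ht
    have hZt := hZpos t ht
    have hZr : (∫ x, Real.exp (t * f x) ∂P) = Z t := rfl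
    have hZ'r : (∫ x, f x * Real.exp (t * f x) ∂P) = Z' t := rfl
    have heq1 : (fun ω => (Real.exp (t * f ω) / Z t) * (Real.log (Z t) - t * f ω))
        = fun ω => (Real.log (Z t) / Z t) * Real.exp (t * f ω)
          - (t / Z t) * (f ω * Real.exp (t * f ω)) := by
      funext ω; ring
    have h1int : Integrable (fun ω => (Real.exp (t * f ω) / Z t)
        * (Real.log (Z t) - t * f ω)) P := by
      rw [heq1]; exact (he.const_mul _).sub ((hfe t ht).const_mul _)
    have h2int : Integrable (fun ω => 1 - Real.exp (t * f ω) / Z t) P :=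
      (integrable_const 1).sub (he.div_const _)
    have hmono : ∀ ω, (Real.exp (t * f ω) / Z t) * (Real.log (Z t) - t * f ω)
        ≤ 1 - Real.exp (t * f ω) / Z t := by
      intro ω
      have hw : (0:ℝ) ≤ Real.exp (t * f ω) / Z t := by positivity
      have hlog : Real.log (Z t) - t * f ω ≤ Z t * Real.exp (-(t * f ω)) - 1 := by
        have hpos : 0 < Z t * Real.exp (-(t * f ω)) := by positivity
        have hls := Real.log_le_sub_one_of_pos hpos
        rw [Real.log_mul hZt.ne' (Real.exp_ne_zero _), Real.log_exp] at hls
        linarith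
      calc (Real.exp (t * f ω) / Z t) * (Real.log (Z t) - t * f ω)
          ≤ (Real.exp (t * f ω) / Z t) * (Z t * Real.exp (-(t * f ω)) - 1) :=
            mul_le_mul_of_nonneg_left hlog hw
        _ = Real.exp (t * f ω) * Real.exp (-(t * f ω)) - Real.exp (t * f ω) / Z t := by
            field_simp
        _ = 1 - Real.exp (t * f ω) / Z t := by rw [← Real.exp_add]; simp
    have hI := integral_mono h1int h2int hmono
    have e1 : ∫ ω, ((Real.exp (t * f ω) / Z t) * (Real.log (Z t) - t * f ω)) ∂P
        = Real.log (Z t) - t * (Z' t / Z t) := by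
      rw [heq1, integral_sub (he.const_mul _) ((hfe t ht).const_mul _),
        integral_const_mul, integral_const_mul, hZr, hZ'r]
      field_simp
    have e2 : ∫ ω, (1 - Real.exp (t * f ω) / Z t) ∂P = 0 := by
      rw [integral_sub (integrable_const 1) (he.div_const _), integral_div, hZr,
        integral_const]
      simp [div_self hZt.ne']
    rw [e1, e2] at hI
    linarith
  -- the antiderivative
  have hZ0 : Z 0 = 1 := by simp [hZdef]
  have hZ'0 : Z' 0 = m := by simp [hZ'def, hm]
  set g : ℝ → ℝ := fun t => if t = 0 then 0 else Real.log (Z t) / t - m with hgdef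
  have hgderiv : ∀ t ∈ Ioo (-ε) (lam₀ + ε), t ≠ 0 →
      HasDerivAt g ((t * (Z' t / Z t) - Real.log (Z t)) / t ^ 2) t := by
    intro t ht htne
    have h1 : HasDerivAt (fun u => Real.log (Z u) / u - m)
        ((Z' t / Z t * t - Real.log (Z t) * 1) / t ^ 2) t :=
      (((hΛderiv t ht).div (hasDerivAt_id t) htne)).sub_const m
    have h2 : g =ᶠ[nhds t] fun u => Real.log (Z u) / u - m := by
      filter_upwards [eventually_ne_nhds htne] with u hu
      simp [hgdef, hu]
    have := h1.congr_of_eventuallyEq h2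
    rw [show (t * (Z' t / Z t) - Real.log (Z t)) / t ^ 2
        = (Z' t / Z t * t - Real.log (Z t) * 1) / t ^ 2 by ring]
    exact this
  have hg0 : ContinuousAt g 0 := by
    have hΛ0 : HasDerivAt (fun t => Real.log (Z t)) m 0 := by
      have h := hΛderiv 0 h0mem
      rwa [hZ'0, hZ0, div_one] at h
    have hslope := hasDerivAt_iff_tendsto_slope.mp hΛ0
    have heq : ∀ x : ℝ, x ≠ 0 → g x = slope (fun t => Real.log (Z t)) 0 x - m := by
      intro x hx
      rw [slope_def_field, hZ0]
      simp [hgdef, hx]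
    have ht : Tendsto g (nhdsWithin 0 {(0:ℝ)}ᶜ) (nhds 0) := by
      have h2 : Tendsto (fun x => slope (fun t => Real.log (Z t)) 0 x - m)
          (nhdsWithin 0 {(0:ℝ)}ᶜ) (nhds (m - m)) := hslope.sub_const m
      rw [sub_self] at h2
      apply h2.congr'
      filter_upwards [self_mem_nhdsWithin] with x hx
      exact (heq x hx).symm
    have hg00 : g 0 = 0 := if_pos rfl
    have htot : Tendsto g (nhdsWithin 0 {(0:ℝ)}ᶜ ⊔ pure 0) (nhds 0) :=
      tendsto_sup.mpr ⟨ht, by simpa [hg00] using tendsto_pure_nhds g 0⟩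
    rw [nhdsNE_sup_pure] at htot
    rw [ContinuousAt, hg00]
    exact htot
  have hgcont : ContinuousOn g (Icc 0 lam) := by
    intro x hx
    rcases eq_or_ne x 0 with rfl | hne
    · exact hg0.continuousWithinAt
    · exact ((hgderiv x (hIcc x hx) hne).continuousAt).continuousWithinAt
  -- FTC
  have hnn2 : ∀ t ∈ Ioo (0 : ℝ) lam, 0 ≤ (t * (Z' t / Z t) - Real.log (Z t)) / t ^ 2 := by
    intro t ht
    have := hDnn t (hIcc t ⟨ht.1.le, ht.2.le⟩)
    exact div_nonneg (by linarith) (sq_nonneg t)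
  have hderivIoo : ∀ t ∈ Ioo (0 : ℝ) lam,
      HasDerivAt g ((t * (Z' t / Z t) - Real.log (Z t)) / t ^ 2) t := fun t ht =>
    hgderiv t (hIcc t ⟨ht.1.le, ht.2.le⟩) ht.1.ne'
  have hint : IntervalIntegrable (fun t => (t * (Z' t / Z t) - Real.log (Z t)) / t ^ 2)
      volume 0 lam := by
    apply intervalIntegral.intervalIntegrable_deriv_of_nonneg
      (g := g)
    · rwa [uIcc_of_le hlam_pos.le]
    · rwa [min_eq_left hlam_pos.le, max_eq_right hlam_pos.le]
    · rwa [min_eq_left hlam_pos.le, max_eq_right hlam_pos.le]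
  have hFTC : (∫ t in (0 : ℝ)..lam, (t * (Z' t / Z t) - Real.log (Z t)) / t ^ 2)
      = g lam - g 0 :=
    intervalIntegral.integral_eq_sub_of_hasDeriv_right_of_le hlam_pos.le hgcont
      (fun x hx => (hderivIoo x hx).hasDerivWithinAt) hint
  have hcongr : (∫ t in (0 : ℝ)..lam, relEntR (P.tilted (fun ω => t * f ω)) P / t ^ 2)
      = ∫ t in (0 : ℝ)..lam, (t * (Z' t / Z t) - Real.log (Z t)) / t ^ 2 := by
    apply intervalIntegral.integral_congr
    intro t ht
    rw [uIcc_of_le hlam_pos.le] at ht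
    rcases eq_or_ne t 0 with rfl | hne
    · simp
    · show relEntR (P.tilted (fun ω => t * f ω)) P / t ^ 2 = _
      rw [hrel t (hIcc t ht)]
  -- conclude
  have hLHS : (fun ω => Real.exp (lam * (f ω - m)))
      = fun ω => Real.exp (-(lam * m)) * Real.exp (lam * f ω) := by
    funext ω; rw [← Real.exp_add]; ring_nf
  rw [hLHS, integral_const_mul, Real.log_mul (Real.exp_ne_zero _) (hZpos lam hlammem).ne',
    Real.log_exp, hcongr, hFTC]
  simp only [hgdef, if_pos rfl, if_neg hlam_pos.ne']
  have : Real.log (Z lam) / lam * lam = Real.log (Z lam) := by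
    field_simp
  rw [sub_zero]
  rw [mul_sub, mul_div_cancel₀ _ hlam_pos.ne']
  ring
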